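/- For every signal f, MTL formulas φ1 and φ2, intervals K and J of nonnegative reals, index i ∈ {1,2,3,4}, and every t ∈ Qⁱ(φ1,φ2,K,J): f^t ⊨ φ1 R_J φ2 under the new satisfaction relation. -/

import Mathlib

open scoped NNReal ENNReal
open Set

namespace MITL

/-- A signal assigns to each nonnegative real time the set of atomic
propositions true at that time. -/
abbrev Signal (AP : Type*) := ℝ≥0 → Set AP

/-- The shifted signal `f^r`, defined by `f^r(t) = f(r+t)`. -/
def shift {AP : Type*} (f : Signal AP) (r : ℝ≥0) : Signal AP := fun t => f (r + t)

/-- MTL formulas over atomic propositions `AP`; the timing constraints are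
(intended to be) intervals of nonnegative reals. -/
inductive MTL (AP : Type*) where
  | top : MTL AP
  | bot : MTL AP
  | atom : AP → MTL AP
  | neg : MTL AP → MTL AP
  | disj : MTL AP → MTL AP → MTL AP
  | conj : MTL AP → MTL AP → MTL AP
  | until_ : MTL AP → MTL AP → Set ℝ≥0 → MTL AP
  | release : MTL AP → MTL AP → Set ℝ≥0 → MTL AP

variable {AP : Type*}

/-- The NEW satisfaction relation: `NSat f φ` means `f ⊨ φ`. -/
def NSat : Signal AP → MTL AP → Prop
  | _, .top => True
  | _, .bot => False
  | f, .atom p => p ∈ f 0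
  | f, .neg φ => ¬ NSat f φ
  | f, .disj φ1 φ2 => NSat f φ1 ∨ NSat f φ2
  | f, .conj φ1 φ2 => NSat f φ1 ∧ NSat f φ2
  | f, .until_ φ1 φ2 I =>
      ∃ t1 ∈ I, NSat (shift f t1) φ2 ∧ ∀ t2 ∈ Set.Ioo 0 t1, NSat (shift f t2) φ1
  | f, .release φ1 φ2 I =>
      (∀ t1 ∈ I, NSat (shift f t1) φ2) ∨
      (∃ t1 : ℝ≥0, 0 < t1 ∧ NSat (shift f t1) φ1 ∧
        ∀ t2 ∈ Set.Ioc 0 t1 ∩ I, NSat (shift f t2) φ2) ∨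
      (∃ t1 ∈ I ∪ {sInf I}, ∃ t2 ∈ I, t1 < t2 ∧
        ∀ t3 ∈ I, (t3 ≤ t1 → NSat (shift f t3) φ2) ∧
          (t1 < t3 → t3 ≤ t2 → NSat (shift f t3) φ1))

/-- Finite variability from the right of a signal `f` with respect to a formula
`φ`, relative to a satisfaction relation `Sat`. -/
def FinVarRight (Sat : Signal AP → MTL AP → Prop) (f : Signal AP) (φ : MTL AP) : Prop :=
  ∀ r : ℝ≥0,
    (∀ ε : ℝ≥0, 0 < ε → ∃ t ∈ Set.Ioo r (r + ε), Sat (shift f t) φ) →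
    ∃ ε : ℝ≥0, 0 < ε ∧ ∀ t ∈ Set.Ioo r (r + ε), Sat (shift f t) φ

/-- Finite variability from the left of a signal `f` with respect to a formula
`φ`, relative to a satisfaction relation `Sat`. -/
def FinVarLeft (Sat : Signal AP → MTL AP → Prop) (f : Signal AP) (φ : MTL AP) : Prop :=
  ∀ r : ℝ≥0, 0 < r →
    (∀ ε ∈ Set.Ioo 0 r, ∃ t ∈ Set.Ioo (r - ε) r, Sat (shift f t) φ) →
    ∃ ε ∈ Set.Ioo 0 r, ∀ t ∈ Set.Ioo (r - ε) r, Sat (shift f t) φ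

/-- Release witness sets: `K ∈ RW f φ1 φ2 i` says that the interval `K` is a
type-`i` release witness (`i ∈ {1,2,3,4}`).  Boundedness above of `K`
expresses `sup K < ∞`. -/
def RW (f : Signal AP) (φ1 φ2 : MTL AP) : ℕ → Set (Set ℝ≥0)
  | 1 => {K | ∀ t ∈ K, NSat (shift f t) φ2}
  | 2 => {K | K.Nonempty ∧ sInf K ∈ K ∧ ∀ t ∈ K, NSat (shift f t) φ1}
  | 3 => {K | K.Nonempty ∧ BddAbove K ∧ sSup K ∈ K ∧
      (∀ t ∈ K, NSat (shift f t) φ2) ∧ NSat (shift f (sSup K)) φ1}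
  | 4 => {K | (K ∪ {sInf K}).Nonempty ∧ (¬ BddAbove K ∨ sSup K ∈ K) ∧
      (∀ t ∈ K, NSat (shift f t) φ2) ∧
      (BddAbove K → ∃ ε : ℝ≥0, 0 < ε ∧
        ∀ t ∈ Set.Ioo (sSup K) (sSup K + ε), NSat (shift f t) φ1)}
  | _ => ∅

/-- The set `t + J = {t + s : s ∈ J}`. -/
def addSet (t : ℝ≥0) (J : Set ℝ≥0) : Set ℝ≥0 := (fun s => t + s) '' J

/-- The set `K + ℝ≥0 = {a + b : a ∈ K, b ≥ 0}`. -/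
def upSet (K : Set ℝ≥0) : Set ℝ≥0 := {x | ∃ a ∈ K, ∃ b : ℝ≥0, x = a + b}

/-- Release proof sets `Qⁱ(φ1,φ2,K,J)` for `i ∈ {1,2,3,4}`.  The conditions
`t < sup K` and `t ≤ sup K` are trivially true when `K` is unbounded above
(its supremum then being `∞`). -/
def RQ (f : Signal AP) (φ1 φ2 : MTL AP) (K J : Set ℝ≥0) : ℕ → Set ℝ≥0
  | 1 => {t | K ∈ RW f φ1 φ2 1 ∧ addSet t J ⊆ K}
  | 2 => {t | K ∈ RW f φ1 φ2 2 ∧ addSet t J ⊆ Set.Ioi (sInf K) ∧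
      (BddAbove K → t < sSup K) ∧ 0 < sInf J}
  | 3 => {t | K ∈ RW f φ1 φ2 3 ∧ addSet t J ⊆ upSet K ∧ t < sSup K}
  | 4 => {t | K ∈ RW f φ1 φ2 4 ∧ addSet t J ⊆ upSet K ∧ (BddAbove K → t ≤ sSup K)}
  | _ => ∅

lemma shift_shift (f : Signal AP) (r s : ℝ≥0) :
    shift (shift f r) s = shift f (r + s) := by
  funext x; simp [shift, add_assoc]

lemma mem_of_upSet_le {K : Set ℝ≥0} (hK : K.OrdConnected) {x u : ℝ≥0}
    (hx : x ∈ upSet K) (hu : u ∈ K) (hxu : x ≤ u) : x ∈ K := by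
  obtain ⟨a, haK, b, rfl⟩ := hx
  exact hK.out haK hu ⟨le_self_add, hxu⟩

theorem release_proofset_sound (f : Signal AP) (φ1 φ2 : MTL AP)
    (K J : Set ℝ≥0) (hK : K.OrdConnected) (hJ : J.OrdConnected)
    (i : ℕ) (hi : i ∈ ({1, 2, 3, 4} : Set ℕ))
    (t : ℝ≥0) (ht : t ∈ RQ f φ1 φ2 K J i) :
    NSat (shift f t) (.release φ1 φ2 J) := by
  simp only [NSat, shift_shift]
  rcases hi with rfl | rfl | rfl | rfl
  · -- case 1
    obtain ⟨hW, hsub⟩ := ht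
    exact Or.inl fun s hs => hW _ (hsub ⟨s, hs, rfl⟩)
  · -- case 2
    obtain ⟨⟨hKne, hInfK, hφ1K⟩, hsub, hbdd, hJpos⟩ := ht
    refine Or.inr (Or.inl ?_)
    by_cases htK : t < sInf K
    · refine ⟨sInf K - t, tsub_pos_of_lt htK, ?_, ?_⟩
      · rw [add_tsub_cancel_of_le htK.le]; exact hφ1K _ hInfK
      · rintro s ⟨⟨-, hs2⟩, hsJ⟩
        have h1 : sInf K < t + s := hsub ⟨s, hsJ, rfl⟩
        have h2 : t + s ≤ sInf K := by
          calc t + s ≤ t + (sInf K - t) := add_le_add_right hs2 _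
          _ = sInf K := add_tsub_cancel_of_le htK.le
        exact absurd h1 h2.not_gt
    · push_neg at htK
      have hu : ∃ u ∈ K, t < u := by
        by_cases hb : BddAbove K
        · exact exists_lt_of_lt_csSup hKne (hbdd hb)
        · obtain ⟨u, huK, hu⟩ := not_bddAbove_iff.mp hb t
          exact ⟨u, huK, hu⟩
      obtain ⟨u, huK, htu⟩ := hu
      set t1 := min (u - t) (sInf J / 2) with ht1def
      have ht1pos : 0 < t1 :=
        lt_min (tsub_pos_of_lt htu) (div_pos hJpos two_pos)
      have hmemK : t + t1 ∈ K := by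
        refine hK.out hInfK huK ⟨htK.trans le_self_add, ?_⟩
        calc t + t1 ≤ t + (u - t) := add_le_add_right (min_le_left _ _) _
        _ = u := add_tsub_cancel_of_le htu.le
      refine ⟨t1, ht1pos, hφ1K _ hmemK, ?_⟩
      rintro s ⟨⟨-, hs2⟩, hsJ⟩
      have : sInf J ≤ s := csInf_le (OrderBot.bddBelow J) hsJ
      have hhalf : sInf J / 2 < sInf J := NNReal.half_lt_self hJpos.ne'
      exact absurd ((hs2.trans (min_le_right _ _)).trans_lt hhalf) this.not_gt
  · -- case 3
    obtain ⟨⟨hKne, hKbdd, hSupK, hφ2K, hφ1sup⟩, hsub, htlt⟩ := ht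
    refine Or.inr (Or.inl ?_)
    refine ⟨sSup K - t, tsub_pos_of_lt htlt, ?_, ?_⟩
    · rw [add_tsub_cancel_of_le htlt.le]; exact hφ1sup
    · rintro s ⟨⟨-, hs2⟩, hsJ⟩
      have hle : t + s ≤ sSup K := by
        calc t + s ≤ t + (sSup K - t) := add_le_add_right hs2 _
        _ = sSup K := add_tsub_cancel_of_le htlt.le
      exact hφ2K _ (mem_of_upSet_le hK (hsub ⟨s, hsJ, rfl⟩) hSupK hle)
  · -- case 4
    obtain ⟨⟨-, hsupmem, hφ2K, hφ1after⟩, hsub, htle⟩ := ht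
    by_cases hb : BddAbove K
    · have hm : sSup K ∈ K := hsupmem.resolve_left (not_not_intro hb)
      have htm : t ≤ sSup K := htle hb
      obtain ⟨ε, hεpos, hφ1ε⟩ := hφ1after hb
      set m := sSup K with hmdef
      set d := m - t with hddef
      have htd : t + d = m := add_tsub_cancel_of_le htm
      have hinK : ∀ s ∈ J, t + s ≤ m → t + s ∈ K := fun s hsJ hle =>
        mem_of_upSet_le hK (hsub ⟨s, hsJ, rfl⟩) hm hle
      by_cases hall : ∀ s ∈ J, t + s ≤ m
      · exact Or.inl fun s hs => hφ2K _ (hinK s hs (hall s hs))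
      · push_neg at hall
        obtain ⟨s0, hs0J, hs0⟩ := hall
        have hds0 : d < s0 := by
          have := htd ▸ hs0
          exact lt_of_add_lt_add_left this
        by_cases hp : ∃ p ∈ J, p ≤ d
        · -- Case A : d ∈ J, use third disjunct with t1 = d
          obtain ⟨p, hpJ, hpd⟩ := hp
          have hdJ : d ∈ J := hJ.out hpJ hs0J ⟨hpd, hds0.le⟩
          set c := min ε (s0 - d) with hcdef
          have hcpos : 0 < c := lt_min hεpos (tsub_pos_of_lt hds0)
          set s1 := d + c / 2 with hs1def
          have hchalf : c / 2 < c := NNReal.half_lt_self hcpos.ne'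
          have hds1 : d < s1 := lt_add_of_pos_right _ (div_pos hcpos two_pos)
          have hs1s0 : s1 ≤ s0 := by
            calc s1 ≤ d + (s0 - d) :=
              add_le_add_right ((hchalf.le).trans (min_le_right _ _)) _
            _ = s0 := add_tsub_cancel_of_le hds0.le
          have hs1J : s1 ∈ J := hJ.out hdJ hs0J ⟨hds1.le, hs1s0⟩
          refine Or.inr (Or.inr ⟨d, Or.inl hdJ, s1, hs1J, hds1, fun t3 ht3J => ⟨?_, ?_⟩⟩)
          · intro h3
            exact hφ2K _ (hinK t3 ht3J (by rw [← htd]; exact add_le_add_right h3 _))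
          · intro h3lo h3hi
            refine hφ1ε _ ⟨?_, ?_⟩
            · rw [← htd]; exact add_lt_add_right h3lo _
            · calc t + t3 ≤ t + s1 := add_le_add_right h3hi _
              _ < t + (d + ε) := add_lt_add_right
                  (add_lt_add_right (hchalf.trans_le (min_le_left _ _)) _) _
              _ = m + ε := by rw [← add_assoc, htd]
        · push_neg at hp
          have hJne : J.Nonempty := ⟨s0, hs0J⟩
          have hdl : d ≤ sInf J := le_csInf hJne fun p hpJ => (hp p hpJ).le
          rcases lt_or_eq_of_le hdl with hdl | hdl
          · -- Case B1 : second disjunct, pick t1 between d and min (sInf J) (d+ε)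
            set c := min (sInf J) (d + ε) with hcdef
            have hdc : d < c := lt_min hdl (lt_add_of_pos_right _ hεpos)
            set t1 := d + (c - d) / 2 with ht1def
            have hhalf : (c - d) / 2 < c - d := NNReal.half_lt_self (tsub_pos_of_lt hdc).ne'
            have hdt1 : d < t1 := lt_add_of_pos_right _ (div_pos (tsub_pos_of_lt hdc) two_pos)
            have ht1c : t1 < c := by
              calc t1 < d + (c - d) := add_lt_add_right hhalf _
              _ = c := add_tsub_cancel_of_le hdc.le
            refine Or.inr (Or.inl ⟨t1, hdt1.trans_le' (zero_le : (0:ℝ≥0) ≤ d), ?_, ?_⟩)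
            · refine hφ1ε _ ⟨?_, ?_⟩
              · rw [← htd]; exact add_lt_add_right hdt1 _
              · calc t + t1 < t + (d + ε) :=
                  add_lt_add_right (ht1c.trans_le (min_le_right _ _)) _
                _ = m + ε := by rw [← add_assoc, htd]
            · rintro s ⟨⟨-, hs2⟩, hsJ⟩
              have : sInf J ≤ s := csInf_le (OrderBot.bddBelow J) hsJ
              have : t1 < s := (ht1c.trans_le (min_le_left _ _)).trans_le this
              exact absurd hs2 this.not_ge
          · -- Case B2 : third disjunct with t1 = sInf J = d
            obtain ⟨s2, hs2J, hs2lt⟩ :=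
              exists_lt_of_csInf_lt hJne (show sInf J < d + ε by
                rw [← hdl]; exact lt_add_of_pos_right _ hεpos)
            refine Or.inr (Or.inr ⟨sInf J, Or.inr rfl, s2, hs2J, ?_, fun t3 ht3J => ⟨?_, ?_⟩⟩)
            · rw [← hdl]; exact hp s2 hs2J
            · intro h3
              exact absurd (h3.trans_eq (hdl.symm)) (hp t3 ht3J).not_ge
            · intro h3lo h3hi
              refine hφ1ε _ ⟨?_, ?_⟩
              · rw [← htd]
                exact add_lt_add_right (hdl ▸ hp t3 ht3J) _
              · calc t + t3 ≤ t + s2 := add_le_add_right h3hi _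
                _ < t + (d + ε) := add_lt_add_right hs2lt _
                _ = m + ε := by rw [← add_assoc, htd]
    · -- K unbounded above : first disjunct
      refine Or.inl fun s hs => ?_
      obtain ⟨u, huK, hu⟩ := not_bddAbove_iff.mp hb (t + s)
      exact hφ2K _ (mem_of_upSet_le hK (hsub ⟨s, hs, rfl⟩) huK hu.le)

end MITL
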